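/- The Laurent polynomial ring $\mathsf{k}[h_1^{\pm 1}, \ldots, h_n^{\pm 1}]$ is a free module of rank $n!$ over its subring of symmetric elements $\mathsf{k}[h_1^{\pm 1}, \ldots, h_n^{\pm 1}]^{S_n}$, where the symmetric group $S_n$ acts by permuting the variables. -/

import Mathlib

/-- The permutation `σ` acting on exponent vectors of Laurent monomials. -/
def permAdd {n : ℕ} (σ : Equiv.Perm (Fin n)) : (Fin n → ℤ) ≃+ (Fin n → ℤ) where
  toFun f := f ∘ σ.symm
  invFun f := f ∘ σ
  left_inv f := by ext i; simp
  right_inv f := by ext i; simp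
  map_add' f g := rfl

/-- The action of the permutation `σ ∈ Sₙ` on the Laurent polynomial ring
`k[h₁^{±1},…,hₙ^{±1}] = k[ℤⁿ]`, permuting the variables. -/
noncomputable def permAlg (k : Type*) [CommRing k] {n : ℕ} (σ : Equiv.Perm (Fin n)) :
    AddMonoidAlgebra k (Fin n → ℤ) ≃ₐ[k] AddMonoidAlgebra k (Fin n → ℤ) :=
  AddMonoidAlgebra.domCongr k k (permAdd σ)

/-- The subalgebra of symmetric Laurent polynomials
`k[h₁^{±1},…,hₙ^{±1}]^{Sₙ}`. -/
noncomputable def symLaurent (k : Type*) [CommRing k] (n : ℕ) :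
    Subalgebra k (AddMonoidAlgebra k (Fin n → ℤ)) where
  carrier := {p | ∀ σ : Equiv.Perm (Fin n), permAlg k σ p = p}
  mul_mem' := by
    intro a b ha hb σ
    rw [map_mul, ha σ, hb σ]
  add_mem' := by
    intro a b ha hb σ
    rw [map_add, ha σ, hb σ]
  algebraMap_mem' := by
    intro c σ
    simpa using (permAlg k σ).commutes c


namespace LaurentFree

variable {n : ℕ}

/-- Number of descents of `σ` among positions `< i`. -/
def dnat (σ : Equiv.Perm (Fin n)) : ℕ → ℕ
  | 0 => 0
  | i + 1 => dnat σ i + if h : i + 1 < n then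
      (if σ ⟨i+1, h⟩ < σ ⟨i, Nat.lt_of_succ_lt h⟩ then 1 else 0) else 0

lemma dnat_le_succ (σ : Equiv.Perm (Fin n)) (i : ℕ) : dnat σ i ≤ dnat σ (i + 1) := by
  simp only [dnat]; split_ifs <;> omega

lemma dnat_mono (σ : Equiv.Perm (Fin n)) : Monotone (dnat σ) :=
  monotone_nat_of_le_succ (dnat_le_succ σ)

lemma dnat_succ_le (σ : Equiv.Perm (Fin n)) (i : ℕ) : dnat σ (i+1) ≤ dnat σ i + 1 := by
  simp only [dnat]; split_ifs <;> omega

lemma dnat_step_lt (σ : Equiv.Perm (Fin n)) {i : ℕ} (h : i + 1 < n)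
    (hd : dnat σ (i+1) = dnat σ i) : σ ⟨i, Nat.lt_of_succ_lt h⟩ < σ ⟨i+1, h⟩ := by
  have hne : σ ⟨i, Nat.lt_of_succ_lt h⟩ ≠ σ ⟨i+1, h⟩ := by
    intro he
    have := σ.injective he
    simp [Fin.ext_iff] at this
  rcases lt_or_gt_of_ne hne with h' | h'
  · exact h'
  · exfalso
    simp only [dnat, dif_pos h, if_pos h'] at hd
    omega

lemma dnat_step_eq_of_not_desc (σ : Equiv.Perm (Fin n)) {i : ℕ} (h : i + 1 < n)
    (h' : σ ⟨i, Nat.lt_of_succ_lt h⟩ < σ ⟨i+1, h⟩) : dnat σ (i+1) = dnat σ i := by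
  simp only [dnat, dif_pos h, if_neg (asymm h'), Nat.add_zero]

/-- The exponent vector of the descent monomial of `σ`, on original coordinates. -/
def cfun (σ : Equiv.Perm (Fin n)) : Fin n → ℤ := fun p => (dnat σ (σ.symm p) : ℤ)

lemma cfun_apply (σ : Equiv.Perm (Fin n)) (i : Fin n) :
    cfun σ (σ i) = (dnat σ i : ℤ) := by simp [cfun]

lemma cfun_nonneg (σ : Equiv.Perm (Fin n)) (p : Fin n) : 0 ≤ cfun σ p := by
  simp [cfun]

/-- The Garsia map: `Φ σ μ = μ ∘ σ⁻¹ + c_σ`. -/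
def Phi (σ : Equiv.Perm (Fin n)) (μ : Fin n → ℤ) : Fin n → ℤ :=
  fun p => μ (σ.symm p) + cfun σ p

lemma Phi_apply (σ : Equiv.Perm (Fin n)) (μ : Fin n → ℤ) (i : Fin n) :
    Phi σ μ (σ i) = μ i + (dnat σ i : ℤ) := by simp [Phi, cfun]

/-- monotone if all adjacent steps are ≤ -/
lemma monotone_of_adj {w : Fin n → ℤ}
    (h : ∀ (i : ℕ) (hi : i + 1 < n), w ⟨i, Nat.lt_of_succ_lt hi⟩ ≤ w ⟨i+1, hi⟩) :
    Monotone w := by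
  have key : ∀ (m : ℕ) (a b : Fin n), (b : ℕ) = (a : ℕ) + m → w a ≤ w b := by
    intro m
    induction m with
    | zero => intro a b hab; have : a = b := Fin.ext (by omega); rw [this]
    | succ m ih =>
      intro a b hab
      have hb : (a : ℕ) + m + 1 < n := by have := b.isLt; omega
      have h1 : w a ≤ w ⟨(a : ℕ) + m, Nat.lt_of_succ_lt hb⟩ := ih a _ rfl
      have h2 : w ⟨(a : ℕ) + m, Nat.lt_of_succ_lt hb⟩ ≤ w ⟨(a : ℕ) + m + 1, hb⟩ := h _ hb
      have : b = ⟨(a : ℕ) + m + 1, hb⟩ := Fin.ext (by simp only [Fin.val_mk]; omega)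
      rw [this]; exact h1.trans h2
  intro a b hab
  exact key ((b : ℕ) - (a : ℕ)) a b (by omega)

/-- uniqueness of monotone rearrangement -/
lemma mono_rearrange_eq {u μ : Fin n → ℤ} (hu : Monotone u) (hμ : Monotone μ)
    (ρ : Equiv.Perm (Fin n)) (h : u = μ ∘ ⇑ρ) : u = μ := by
  have key := Tuple.comp_perm_comp_sort_eq_comp_sort (σ := ρ) (f := μ)
  rw [← h] at key
  rw [Tuple.sort_eq_refl_iff_monotone.2 hu] at key
  rw [Tuple.sort_eq_refl_iff_monotone.2 hμ] at key
  simpa using key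



variable {n : ℕ}

/-- Majorization transform. -/
def Dfn (ν : Fin n → ℤ) (t : ℤ) : ℤ := ∑ i, max (ν i - t) 0

/-- Strict reverse-lexicographic comparison. -/
def rlt (g h : Fin n → ℤ) : Prop := ∃ p, g p < h p ∧ ∀ q, p < q → g q = h q

/-- The (partial) order used for the triangularity argument. -/
def ord (g h : Fin n → ℤ) : Prop :=
  (∀ t, Dfn g t ≤ Dfn h t) ∧ ((∀ t, Dfn g t = Dfn h t) → g = h ∨ rlt g h)

lemma rlt_irrefl (g : Fin n → ℤ) : ¬ rlt g g := by
  rintro ⟨p, hp, -⟩; exact absurd hp (lt_irrefl _)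

lemma rlt_asymm {g h : Fin n → ℤ} (h1 : rlt g h) (h2 : rlt h g) : False := by
  obtain ⟨p1, hp1, he1⟩ := h1
  obtain ⟨p2, hp2, he2⟩ := h2
  rcases lt_trichotomy p1 p2 with h | h | h
  · rw [he1 p2 h] at hp2; exact absurd hp2 (lt_irrefl _)
  · subst h; omega
  · rw [he2 p1 h] at hp1; exact absurd hp1 (lt_irrefl _)

lemma rlt_trans {g h u : Fin n → ℤ} (h1 : rlt g h) (h2 : rlt h u) : rlt g u := by
  obtain ⟨p1, hp1, he1⟩ := h1
  obtain ⟨p2, hp2, he2⟩ := h2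
  rcases lt_trichotomy p1 p2 with h | h | h
  · exact ⟨p2, by rw [he1 p2 h]; exact hp2, fun q hq => by
      rw [he1 q (h.trans hq), he2 q hq]⟩
  · subst h; exact ⟨p1, hp1.trans hp2, fun q hq => by rw [he1 q hq, he2 q hq]⟩
  · exact ⟨p1, by rw [← he2 p1 h]; exact hp1, fun q hq => by
      rw [he1 q hq, he2 q (h.trans hq)]⟩

lemma ord_refl (g : Fin n → ℤ) : ord g g := ⟨fun _ => le_rfl, fun _ => Or.inl rfl⟩

lemma ord_trans {g h u : Fin n → ℤ} (h1 : ord g h) (h2 : ord h u) : ord g u := by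
  refine ⟨fun t => (h1.1 t).trans (h2.1 t), fun hD => ?_⟩
  have hgh : ∀ t, Dfn g t = Dfn h t := fun t => le_antisymm (h1.1 t) ((h2.1 t).trans (hD t).symm.le)
  have hhu : ∀ t, Dfn h t = Dfn u t := fun t => by rw [← hgh t]; exact hD t
  rcases h1.2 hgh with rfl | r1
  · exact h2.2 hhu
  · rcases h2.2 hhu with rfl | r2
    · exact Or.inr r1
    · exact Or.inr (rlt_trans r1 r2)

lemma ord_antisymm {g h : Fin n → ℤ} (h1 : ord g h) (h2 : ord h g) : g = h := by
  have hD : ∀ t, Dfn g t = Dfn h t := fun t => le_antisymm (h1.1 t) (h2.1 t)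
  rcases h1.2 hD with rfl | r1
  · rfl
  · rcases h2.2 (fun t => (hD t).symm) with rfl | r2
    · rfl
    · exact absurd (rlt_asymm r1 r2) not_false

/-- every nonempty finset has an `ord`-maximal element -/
lemma exists_ord_max (s : Finset (Fin n → ℤ)) (hs : s.Nonempty) :
    ∃ ν ∈ s, ∀ a ∈ s, ord ν a → a = ν := by
  classical
  induction s using Finset.induction_on with
  | empty => exact absurd hs (by simp)
  | @insert x s hx ih =>
    rcases s.eq_empty_or_nonempty with rfl | hne
    · exact ⟨x, by simp, fun a ha _ => by simpa using ha⟩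
    · obtain ⟨ν, hν, hmax⟩ := ih hne
      by_cases hor : ord ν x
      · refine ⟨x, by simp, fun a ha hxa => ?_⟩
        rcases Finset.mem_insert.1 ha with rfl | ha
        · rfl
        · have h1 : a = ν := hmax a ha (ord_trans hor hxa)
          subst h1
          exact ord_antisymm hor hxa
      · refine ⟨ν, Finset.mem_insert_of_mem hν, fun a ha hνa => ?_⟩
        rcases Finset.mem_insert.1 ha with rfl | ha
        · exact absurd hνa hor
        · exact hmax a ha hνa



variable {n : ℕ}

/-- localization of a sum at a pair of coordinates -/
lemma sum_pair_off {f g : Fin n → ℤ} {i j : Fin n} (hij : i ≠ j)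
    (hoff : ∀ p, p ≠ i → p ≠ j → f p = g p) :
    (∑ p, f p) + (g i + g j) = (∑ p, g p) + (f i + f j) := by
  classical
  have hmemi : i ∈ (Finset.univ : Finset (Fin n)) := Finset.mem_univ i
  have hmemj : ∀ (u : Fin n → ℤ), j ∈ Finset.univ.erase i := fun _ =>
    Finset.mem_erase.2 ⟨Ne.symm hij, Finset.mem_univ j⟩
  have h2 : ∀ (u : Fin n → ℤ),
      ∑ p, u p = (∑ p ∈ (Finset.univ.erase i).erase j, u p) + u j + u i := by
    intro u
    rw [Finset.sum_erase_add _ _ (hmemj u), Finset.sum_erase_add _ _ hmemi]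
  have h3 : ∑ p ∈ (Finset.univ.erase i).erase j, f p
      = ∑ p ∈ (Finset.univ.erase i).erase j, g p := by
    apply Finset.sum_congr rfl
    intro p hp
    have h4 := Finset.mem_erase.1 hp
    have h5 := Finset.mem_erase.1 h4.2
    exact hoff p h5.1 h4.1
  rw [h2 f, h2 g, h3]; ring

lemma max_convex {M m p q t : ℤ} (hmp : m ≤ p) (hmq : m ≤ q) (hpM : p ≤ M) (hqM : q ≤ M)
    (hs : M + m = p + q) :
    max (p - t) 0 + max (q - t) 0 ≤ max (M - t) 0 + max (m - t) 0 := by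
  simp only [max_def]
  split_ifs <;> omega

/-- rearrangement vector on original coordinates -/
def gv (σ : Equiv.Perm (Fin n)) (u : Fin n → ℤ) : Fin n → ℤ :=
  fun p => u (σ.symm p) + cfun σ p

lemma gv_apply (σ : Equiv.Perm (Fin n)) (u : Fin n → ℤ) (i : Fin n) :
    gv σ u (σ i) = u i + (dnat σ i : ℤ) := by simp [gv, cfun]

lemma Phi_eq_gv (σ : Equiv.Perm (Fin n)) (μ : Fin n → ℤ) : Phi σ μ = gv σ μ := rfl

section step

variable (σ : Equiv.Perm (Fin n)) (u : Fin n → ℤ) {i : ℕ} (hi : i + 1 < n)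

/-- the adjacent swap step increases `ord` -/
lemma step_ord (hdesc : u ⟨i+1, hi⟩ < u ⟨i, Nat.lt_of_succ_lt hi⟩) :
    ord (gv σ u) (gv σ (u ∘ ⇑(Equiv.swap ⟨i, Nat.lt_of_succ_lt hi⟩ ⟨i+1, hi⟩))) := by
  classical
  set I : Fin n := ⟨i, Nat.lt_of_succ_lt hi⟩ with hI
  set J : Fin n := ⟨i+1, hi⟩ with hJ
  have hIJ : I ≠ J := by simp [hI, hJ, Fin.ext_iff]
  set u' := u ∘ ⇑(Equiv.swap I J) with hu'
  set P := σ I with hP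
  set Q := σ J with hQ
  have hPQ : P ≠ Q := fun h => hIJ (σ.injective h)
  -- values
  have hsymmP : σ.symm P = I := σ.symm_apply_apply I
  have hsymmQ : σ.symm Q = J := σ.symm_apply_apply J
  have hu'I : u' I = u J := by simp [hu']
  have hu'J : u' J = u I := by simp [hu']
  have hoffu : ∀ p, p ≠ I → p ≠ J → u' p = u p := by
    intro p h1 h2; simp [hu', Equiv.swap_apply_of_ne_of_ne h1 h2]
  have hgvP : gv σ u P = u I + (dnat σ i : ℤ) := by
    rw [hP]; rw [gv_apply]
  have hgvQ : gv σ u Q = u J + (dnat σ (i+1) : ℤ) := by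
    rw [hQ]; rw [gv_apply]
  have hgv'P : gv σ u' P = u J + (dnat σ i : ℤ) := by
    rw [hP]; rw [gv_apply, hu'I]
  have hgv'Q : gv σ u' Q = u I + (dnat σ (i+1) : ℤ) := by
    rw [hQ]; rw [gv_apply, hu'J]
  have hoff : ∀ p, p ≠ P → p ≠ Q → gv σ u p = gv σ u' p := by
    intro p h1 h2
    have e1 : σ.symm p ≠ I := fun h => h1 (by rw [← hsymmP] at h; exact σ.symm.injective h)
    have e2 : σ.symm p ≠ J := fun h => h2 (by rw [← hsymmQ] at h; exact σ.symm.injective h)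
    simp only [gv]
    rw [hoffu _ e1 e2]
  have hd : (dnat σ i : ℤ) ≤ (dnat σ (i+1) : ℤ) := by exact_mod_cast dnat_le_succ σ i
  -- localization identity for every t
  have hloc : ∀ t, Dfn (gv σ u) t + (max (gv σ u' P - t) 0 + max (gv σ u' Q - t) 0)
      = Dfn (gv σ u') t + (max (gv σ u P - t) 0 + max (gv σ u Q - t) 0) := by
    intro t
    have := sum_pair_off (f := fun p => max (gv σ u p - t) 0)
      (g := fun p => max (gv σ u' p - t) 0) hPQ (fun p h1 h2 => by rw [hoff p h1 h2])
    simpa only [Dfn] using this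
  constructor
  · intro t
    have hcvx : max (gv σ u P - t) 0 + max (gv σ u Q - t) 0
        ≤ max (gv σ u' Q - t) 0 + max (gv σ u' P - t) 0 := by
      rw [hgvP, hgvQ, hgv'P, hgv'Q]
      exact max_convex (by omega) (by omega) (by omega) (by omega) (by ring)
    have := hloc t
    omega
  · intro hD
    -- ties force equal descent counts
    have heq : ∀ t, max (gv σ u P - t) 0 + max (gv σ u Q - t) 0
        = max (gv σ u' P - t) 0 + max (gv σ u' Q - t) 0 := by
      intro t
      have := hloc t
      have := hD t
      omega
    have hde : dnat σ (i+1) = dnat σ i := by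
      by_contra hne
      have hlt : (dnat σ i : ℤ) < (dnat σ (i+1) : ℤ) := by
        have := lt_of_le_of_ne (dnat_le_succ σ i) (Ne.symm hne)
        exact_mod_cast this
      have := heq (u I + (dnat σ (i+1) : ℤ) - 1)
      rw [hgvP, hgvQ, hgv'P, hgv'Q] at this
      simp only [max_def] at this
      split_ifs at this <;> omega
    have hσlt : σ I < σ J := dnat_step_lt σ hi hde
    right
    refine ⟨Q, ?_, ?_⟩
    · rw [hgvQ, hgv'Q, hde]; omega
    · intro q hq
      have h1 : q ≠ Q := ne_of_gt hq
      have h2 : q ≠ P := by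
        intro h; subst h
        exact absurd (hσlt.trans hq) (lt_irrefl _)
      exact hoff q h2 h1

end step


variable {n : ℕ}

open Finset in
/-- number of inversions -/
def invCount (u : Fin n → ℤ) : ℕ :=
  (Finset.univ.filter fun pr : Fin n × Fin n => pr.1 < pr.2 ∧ u pr.2 < u pr.1).card

lemma invCount_swap_lt (u : Fin n → ℤ) {i : ℕ} (hi : i + 1 < n)
    (hdesc : u ⟨i+1, hi⟩ < u ⟨i, Nat.lt_of_succ_lt hi⟩) :
    invCount (u ∘ ⇑(Equiv.swap ⟨i, Nat.lt_of_succ_lt hi⟩ ⟨i+1, hi⟩)) < invCount u := by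
  classical
  set I : Fin n := ⟨i, Nat.lt_of_succ_lt hi⟩ with hI
  set J : Fin n := ⟨i+1, hi⟩ with hJ
  set s := Equiv.swap I J with hs
  set u' := u ∘ ⇑s with hu'
  have hIJlt : I < J := by simp [hI, hJ, Fin.lt_def]
  have hmemIJ : (I, J) ∈ (Finset.univ.filter
      fun pr : Fin n × Fin n => pr.1 < pr.2 ∧ u pr.2 < u pr.1) := by
    simp only [Finset.mem_filter, Finset.mem_univ, true_and]
    exact ⟨hIJlt, hdesc⟩
  have hswap_lt : ∀ a b : Fin n, a < b → ¬(a = I ∧ b = J) → s a < s b := by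
    intro a b hab hne
    by_cases haI : a = I
    · subst haI
      have hbJ : b ≠ J := fun h => hne ⟨rfl, h⟩
      have hbI : b ≠ I := ne_of_gt hab
      rw [Equiv.swap_apply_left, Equiv.swap_apply_of_ne_of_ne hbI hbJ]
      rw [Fin.lt_def] at hab ⊢
      simp only [hI, hJ] at *
      have : (b : ℕ) ≠ i + 1 := fun h => hbJ (Fin.ext (by simpa using h))
      omega
    · by_cases haJ : a = J
      · subst haJ
        have hbI : b ≠ I := fun h => (by subst h; exact absurd (hIJlt.trans hab) (lt_irrefl _))
        have hbJ : b ≠ J := ne_of_gt hab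
        rw [Equiv.swap_apply_right, Equiv.swap_apply_of_ne_of_ne hbI hbJ]
        exact hIJlt.trans hab
      · rw [Equiv.swap_apply_of_ne_of_ne haI haJ]
        by_cases hbI : b = I
        · subst hbI
          rw [Equiv.swap_apply_left]
          exact hab.trans hIJlt
        · by_cases hbJ : b = J
          · subst hbJ
            rw [Equiv.swap_apply_right]
            rw [Fin.lt_def] at hab ⊢
            simp only [hI, hJ] at *
            have : (a : ℕ) ≠ i := fun h => haI (Fin.ext (by simpa using h))
            omega
          · rw [Equiv.swap_apply_of_ne_of_ne hbI hbJ]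
            exact hab
  apply Nat.lt_of_le_of_lt
    (Finset.card_le_card_of_injOn (fun pr => (s pr.1, s pr.2)) ?_ ?_)
    (Finset.card_erase_lt_of_mem hmemIJ)
  · -- maps into erase
    rintro ⟨a, b⟩ hab
    simp only [Finset.coe_filter, Set.mem_setOf_eq, Finset.mem_univ, true_and] at hab
    obtain ⟨h1, h2⟩ := hab
    have hnepair : ¬(a = I ∧ b = J) := by
      rintro ⟨rfl, rfl⟩
      simp only [hu', hs, Function.comp_apply, Equiv.swap_apply_left, Equiv.swap_apply_right] at h2
      exact absurd (h2.trans hdesc) (lt_irrefl _)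
    rw [Finset.mem_coe]
    refine Finset.mem_erase.2 ⟨?_, ?_⟩
    · intro h
      have ha : s a = I := congrArg Prod.fst h
      have hb : s b = J := congrArg Prod.snd h
      have ha' : a = J := by
        have := congrArg s ha
        rwa [Equiv.swap_apply_self, Equiv.swap_apply_left] at this
      have hb' : b = I := by
        have := congrArg s hb
        rwa [Equiv.swap_apply_self, Equiv.swap_apply_right] at this
      subst ha'; subst hb'
      exact absurd (h1.trans hIJlt) (lt_irrefl _)
    · simp only [Finset.mem_filter, Finset.mem_univ, true_and]
      refine ⟨hswap_lt a b h1 hnepair, ?_⟩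
      simpa [hu'] using h2
  · intro x hx y hy hxy
    have h1 := congrArg Prod.fst hxy
    have h2 := congrArg Prod.snd hxy
    simp only at h1 h2
    exact Prod.ext (s.injective h1) (s.injective h2)


variable {n : ℕ}

lemma ord_gv_chain (σ : Equiv.Perm (Fin n)) {μ : Fin n → ℤ} (hμ : Monotone μ) :
    ∀ (N : ℕ) (u : Fin n → ℤ), invCount u ≤ N → (∃ ρ : Equiv.Perm (Fin n), u = μ ∘ ⇑ρ) →
      ord (gv σ u) (gv σ μ) := by
  intro N
  induction N with
  | zero =>
    intro u hN hrear
    by_cases hdesc : ∃ (i : ℕ) (hi : i + 1 < n), u ⟨i+1, hi⟩ < u ⟨i, Nat.lt_of_succ_lt hi⟩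
    · obtain ⟨i, hi, hlt⟩ := hdesc
      exfalso
      have hpos : 0 < invCount u := Finset.card_pos.2
        ⟨(⟨i, Nat.lt_of_succ_lt hi⟩, ⟨i+1, hi⟩), by
          simp only [invCount, Finset.mem_filter, Finset.mem_univ, true_and]
          exact ⟨by simp [Fin.lt_def], hlt⟩⟩
      omega
    · push_neg at hdesc
      obtain ⟨ρ, hρ⟩ := hrear
      have hu : Monotone u := monotone_of_adj (fun i hi => hdesc i hi)
      rw [mono_rearrange_eq hu hμ ρ hρ]
      exact ord_refl _
  | succ N ih =>
    intro u hN hrear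
    by_cases hdesc : ∃ (i : ℕ) (hi : i + 1 < n), u ⟨i+1, hi⟩ < u ⟨i, Nat.lt_of_succ_lt hi⟩
    · obtain ⟨i, hi, hlt⟩ := hdesc
      have hcard := invCount_swap_lt u hi hlt
      obtain ⟨ρ, hρ⟩ := hrear
      refine ord_trans (step_ord σ u hi hlt) (ih _ (by omega) ?_)
      refine ⟨ρ * Equiv.swap ⟨i, Nat.lt_of_succ_lt hi⟩ ⟨i+1, hi⟩, ?_⟩
      funext p
      simp [hρ, Equiv.Perm.mul_apply]
    · push_neg at hdesc
      obtain ⟨ρ, hρ⟩ := hrear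
      have hu : Monotone u := monotone_of_adj (fun i hi => hdesc i hi)
      rw [mono_rearrange_eq hu hμ ρ hρ]
      exact ord_refl _

lemma key_triangle (σ π : Equiv.Perm (Fin n)) {μ : Fin n → ℤ} (hμ : Monotone μ) :
    ord (fun p => μ (π p) + cfun σ p) (Phi σ μ) := by
  have h1 : (fun p => μ (π p) + cfun σ p) = gv σ (μ ∘ ⇑(π * σ)) := by
    funext p
    simp [gv, Equiv.Perm.mul_apply]
  rw [h1, Phi_eq_gv]
  exact ord_gv_chain σ hμ (invCount (μ ∘ ⇑(π * σ))) _ le_rfl ⟨π * σ, rfl⟩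

lemma exists_sorted (ν : Fin n → ℤ) :
    ∃ (σ : Equiv.Perm (Fin n)) (μ : Fin n → ℤ), Monotone μ ∧ Phi σ μ = ν ∧
      ((∀ i, 0 ≤ ν i) → ∀ i, 0 ≤ μ i) := by
  set σ := Tuple.sort ν with hσ
  obtain ⟨hmono, hties⟩ := Tuple.eq_sort_iff.mp hσ
  set μ : Fin n → ℤ := fun i => ν (σ i) - (dnat σ (i : ℕ) : ℤ) with hμdef
  have hm : Monotone μ := by
    apply monotone_of_adj
    intro i hi
    have hle : ν (σ ⟨i, Nat.lt_of_succ_lt hi⟩) ≤ ν (σ ⟨i+1, hi⟩) := by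
      have : (⟨i, Nat.lt_of_succ_lt hi⟩ : Fin n) ≤ ⟨i+1, hi⟩ := by simp [Fin.le_def]
      exact hmono this
    by_cases hio : σ ⟨i+1, hi⟩ < σ ⟨i, Nat.lt_of_succ_lt hi⟩
    · have hne : ν (σ ⟨i, Nat.lt_of_succ_lt hi⟩) ≠ ν (σ ⟨i+1, hi⟩) := by
        intro he
        have := hties ⟨i, Nat.lt_of_succ_lt hi⟩ ⟨i+1, hi⟩ (by simp [Fin.lt_def]) he
        exact absurd (this.trans hio) (lt_irrefl _)
      have hstrict : ν (σ ⟨i, Nat.lt_of_succ_lt hi⟩) < ν (σ ⟨i+1, hi⟩) := lt_of_le_of_ne hle hne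
      have hd : dnat σ (i+1) = dnat σ i + 1 := by
        simp only [dnat, dif_pos hi, if_pos hio]
      simp only [hμdef, hd]
      push_cast
      omega
    · have hd : dnat σ (i+1) = dnat σ i := by
        simp only [dnat, dif_pos hi, if_neg hio, Nat.add_zero]
      simp only [hμdef, hd]
      omega
  refine ⟨σ, μ, hm, ?_, ?_⟩
  · funext p
    simp [Phi, cfun, hμdef, Equiv.apply_symm_apply]
  · intro h0 i
    have hpos : 0 < n := i.pos
    have h1 : μ ⟨0, hpos⟩ ≤ μ i := hm (by simp [Fin.le_def])
    have h2 : μ ⟨0, hpos⟩ = ν (σ ⟨0, hpos⟩) := by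
      simp [hμdef, dnat]
    have := h0 (σ ⟨0, hpos⟩)
    omega

lemma sigma_lt_of_dnat_eq (σ : Equiv.Perm (Fin n)) :
    ∀ (m : ℕ) (a b : Fin n), (b : ℕ) = (a : ℕ) + m → 0 < m →
      dnat σ (a : ℕ) = dnat σ (b : ℕ) → σ a < σ b := by
  intro m
  induction m with
  | zero => intro a b _ h; omega
  | succ m ih =>
    intro a b hab _ hd
    rcases Nat.eq_zero_or_pos m with rfl | hm
    · have hlt : (a : ℕ) + 1 < n := by have := b.isLt; omega
      have hde : dnat σ ((a : ℕ) + 1) = dnat σ (a : ℕ) := by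
        rw [show (a : ℕ) + 1 = (b : ℕ) by omega]
        omega
      have key := dnat_step_lt σ (i := (a : ℕ)) hlt hde
      have ha : (⟨(a : ℕ), Nat.lt_of_succ_lt hlt⟩ : Fin n) = a := Fin.eta a _
      have hb : (⟨(a : ℕ) + 1, hlt⟩ : Fin n) = b := Fin.ext (by simp only [Fin.val_mk]; omega)
      rwa [ha, hb] at key
    · have hmid : (a : ℕ) + 1 < n := by have := b.isLt; omega
      have h1 : dnat σ (a : ℕ) ≤ dnat σ ((a : ℕ) + 1) := dnat_le_succ σ _
      have h2 : dnat σ ((a : ℕ) + 1) ≤ dnat σ (b : ℕ) := dnat_mono σ (by omega)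
      have he1 : dnat σ ((a : ℕ) + 1) = dnat σ (a : ℕ) := by omega
      have hstep : σ a < σ (⟨(a : ℕ) + 1, hmid⟩ : Fin n) := by
        have key := dnat_step_lt σ (i := (a : ℕ)) hmid he1
        have ha : (⟨(a : ℕ), Nat.lt_of_succ_lt hmid⟩ : Fin n) = a := Fin.eta a _
        rwa [ha] at key
      have hrest : σ (⟨(a : ℕ) + 1, hmid⟩ : Fin n) < σ b := by
        refine ih ⟨(a : ℕ) + 1, hmid⟩ b (by simp only [Fin.val_mk]; omega) hm ?_
        simp only [Fin.val_mk]
        omega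
      exact hstep.trans hrest

lemma sort_eq_of_phi (σ : Equiv.Perm (Fin n)) {μ : Fin n → ℤ} (hμ : Monotone μ) :
    σ = Tuple.sort (Phi σ μ) := by
  rw [Tuple.eq_sort_iff]
  constructor
  · intro a b hab
    simp only [Function.comp_apply, Phi_apply]
    have h1 : μ a ≤ μ b := hμ hab
    have h2 : dnat σ (a : ℕ) ≤ dnat σ (b : ℕ) := dnat_mono σ hab
    omega
  · intro a b hab he
    rw [Phi_apply, Phi_apply] at he
    have h1 : μ a ≤ μ b := hμ hab.le
    have h2 : dnat σ (a : ℕ) ≤ dnat σ (b : ℕ) := dnat_mono σ hab.le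
    have h3 : dnat σ (a : ℕ) = dnat σ (b : ℕ) := by omega
    exact sigma_lt_of_dnat_eq σ ((b : ℕ) - (a : ℕ)) a b (by omega)
      (by rw [Fin.lt_def] at hab; omega) h3

lemma phi_inj {σ σ' : Equiv.Perm (Fin n)} {μ μ' : Fin n → ℤ} (hμ : Monotone μ)
    (hμ' : Monotone μ') (h : Phi σ μ = Phi σ' μ') : σ = σ' ∧ μ = μ' := by
  have hσ : σ = σ' := by rw [sort_eq_of_phi σ hμ, h, ← sort_eq_of_phi σ' hμ']
  subst hσ
  refine ⟨rfl, funext fun i => ?_⟩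
  have h1 := congrFun h (σ i)
  rw [Phi_apply, Phi_apply] at h1
  omega


variable {n : ℕ} {k : Type*} [CommRing k]

lemma mem_symLaurent_iff {p : AddMonoidAlgebra k (Fin n → ℤ)} :
    p ∈ symLaurent k n ↔ ∀ σ : Equiv.Perm (Fin n), permAlg k σ p = p := Iff.rfl

lemma permAlg_coeff (σ : Equiv.Perm (Fin n)) (p : AddMonoidAlgebra k (Fin n → ℤ))
    (a : Fin n → ℤ) : (permAlg k σ p).coeff a = p.coeff (a ∘ ⇑σ) := by
  have h1 : (permAlg k σ p).coeff a = p.coeff ((permAdd σ).symm a) := by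
    simp [permAlg, AddMonoidAlgebra.coeff_domCongr]
  rw [h1]
  rfl

lemma mem_symLaurent_coeff {p : AddMonoidAlgebra k (Fin n → ℤ)} (hp : p ∈ symLaurent k n)
    (σ : Equiv.Perm (Fin n)) (a : Fin n → ℤ) : p.coeff (a ∘ ⇑σ) = p.coeff a := by
  calc p.coeff (a ∘ ⇑σ) = (permAlg k σ p).coeff a := (permAlg_coeff σ p a).symm
  _ = p.coeff a := by rw [hp σ]

/-- the orbit of an exponent vector, as a finset -/
noncomputable def orb (μ : Fin n → ℤ) : Finset (Fin n → ℤ) :=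
  Finset.image (fun ρ : Equiv.Perm (Fin n) => μ ∘ ⇑ρ) Finset.univ

lemma mem_orb {μ a : Fin n → ℤ} : a ∈ orb μ ↔ ∃ ρ : Equiv.Perm (Fin n), μ ∘ ⇑ρ = a := by
  simp [orb]

lemma self_mem_orb (μ : Fin n → ℤ) : μ ∈ orb μ :=
  mem_orb.2 ⟨1, by funext p; simp⟩

lemma orb_comp_mem {μ a : Fin n → ℤ} (ρ : Equiv.Perm (Fin n)) (h : a ∈ orb μ) :
    a ∘ ⇑ρ ∈ orb μ := by
  obtain ⟨τ, hτ⟩ := mem_orb.1 h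
  refine mem_orb.2 ⟨τ * ρ, ?_⟩
  funext p
  simp [← hτ, Equiv.Perm.mul_apply]

lemma orb_comp_iff {μ a : Fin n → ℤ} (ρ : Equiv.Perm (Fin n)) :
    a ∘ ⇑ρ ∈ orb μ ↔ a ∈ orb μ := by
  constructor
  · intro h
    have h2 := orb_comp_mem ρ⁻¹ h
    have h3 : (a ∘ ⇑ρ) ∘ ⇑ρ⁻¹ = a := by
      funext p
      simp
    rwa [h3] at h2
  · exact orb_comp_mem ρ

/-- the orbit sum (monomial symmetric function) -/
noncomputable def msum (μ : Fin n → ℤ) : AddMonoidAlgebra k (Fin n → ℤ) :=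
  ∑ w ∈ orb μ, AddMonoidAlgebra.single w 1

lemma msum_coeff (μ a : Fin n → ℤ) :
    (msum μ : AddMonoidAlgebra k (Fin n → ℤ)).coeff a = if a ∈ orb μ then 1 else 0 := by
  classical
  rw [msum, AddMonoidAlgebra.coeff_sum, Finsupp.finset_sum_apply]
  rw [show (∑ w ∈ orb μ, (AddMonoidAlgebra.single w (1:k)).coeff a)
      = ∑ w ∈ orb μ, if w = a then (1:k) else 0 from
    Finset.sum_congr rfl fun w _ => Finsupp.single_apply]
  exact Finset.sum_ite_eq' (orb μ) a (fun _ => (1:k))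

lemma msum_mem (μ : Fin n → ℤ) :
    (msum μ : AddMonoidAlgebra k (Fin n → ℤ)) ∈ symLaurent k n := by
  intro σ
  apply AddMonoidAlgebra.ext
  apply Finsupp.ext
  intro a
  rw [permAlg_coeff, msum_coeff, msum_coeff]
  exact if_congr (orb_comp_iff σ) rfl rfl

/-- the descent monomial -/
noncomputable def bas (σ : Equiv.Perm (Fin n)) : AddMonoidAlgebra k (Fin n → ℤ) :=
  AddMonoidAlgebra.single (cfun σ) 1

lemma mul_bas_coeff (p : AddMonoidAlgebra k (Fin n → ℤ)) (σ : Equiv.Perm (Fin n))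
    (a : Fin n → ℤ) : (p * (bas σ : AddMonoidAlgebra k (Fin n → ℤ))).coeff a = p.coeff (a - cfun σ) := by
  have h1 : (bas σ : AddMonoidAlgebra k (Fin n → ℤ))
      = AddMonoidAlgebra.single (cfun σ) (1 : k) := rfl
  rw [h1, AddMonoidAlgebra.coeff_mul_single_apply, mul_one, sub_eq_add_neg]

lemma const_single_mem (c : ℤ) :
    (AddMonoidAlgebra.single (fun _ => c : Fin n → ℤ) 1 : AddMonoidAlgebra k (Fin n → ℤ))
      ∈ symLaurent k n := by
  intro σ
  show (AddMonoidAlgebra.domCongr k k (permAdd σ)) _ = _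
  rw [AddMonoidAlgebra.domCongr_single]
  rfl


variable {n : ℕ} {k : Type*} [CommRing k]

lemma srt_monotone (w : Fin n → ℤ) : Monotone (w ∘ ⇑(Tuple.sort w)) :=
  (Tuple.eq_sort_iff.mp rfl).1

lemma coeff_srt {p : AddMonoidAlgebra k (Fin n → ℤ)} (hp : p ∈ symLaurent k n)
    (w : Fin n → ℤ) : p.coeff (w ∘ ⇑(Tuple.sort w)) = p.coeff w :=
  mem_symLaurent_coeff hp (Tuple.sort w) w

lemma bas_linearIndependent :
    LinearIndependent (symLaurent k n)
      (fun σ : Equiv.Perm (Fin n) => (bas σ : AddMonoidAlgebra k (Fin n → ℤ))) := by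
  classical
  rw [Fintype.linearIndependent_iff]
  intro g hsum
  by_contra hne
  push_neg at hne
  obtain ⟨σ₁, hσ₁⟩ := hne
  set T : Finset (Fin n → ℤ) := Finset.univ.biUnion
      (fun σ : Equiv.Perm (Fin n) =>
        ((g σ : AddMonoidAlgebra k (Fin n → ℤ)).coeff.support.image
          (fun w => Phi σ (w ∘ ⇑(Tuple.sort w))))) with hT
  have hA1 : ((g σ₁ : AddMonoidAlgebra k (Fin n → ℤ))) ≠ 0 := by
    simpa using hσ₁
  have hTne : T.Nonempty := by
    obtain ⟨w, hw⟩ := (Finsupp.support_nonempty_iff (f := (g σ₁ : AddMonoidAlgebra k (Fin n → ℤ)).coeff)).2 (by simpa using hA1)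
    exact ⟨Phi σ₁ (w ∘ ⇑(Tuple.sort w)), Finset.mem_biUnion.2
      ⟨σ₁, Finset.mem_univ _, Finset.mem_image.2 ⟨w, hw, rfl⟩⟩⟩
  obtain ⟨ν, hνT, hmax⟩ := exists_ord_max T hTne
  obtain ⟨σ₀, -, hν⟩ := Finset.mem_biUnion.1 hνT
  obtain ⟨w₀, hw₀, hνeq⟩ := Finset.mem_image.1 hν
  set μ₀ : Fin n → ℤ := w₀ ∘ ⇑(Tuple.sort w₀) with hμ₀def
  have hμ₀ : Monotone μ₀ := srt_monotone w₀
  have hval₀ : (g σ₀ : AddMonoidAlgebra k (Fin n → ℤ)).coeff μ₀ ≠ 0 := by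
    rw [hμ₀def, coeff_srt (g σ₀).2]
    exact Finsupp.mem_support_iff.1 hw₀
  -- the coefficient of the sum at ν
  have hcoeff : ∑ σ : Equiv.Perm (Fin n),
      (g σ : AddMonoidAlgebra k (Fin n → ℤ)).coeff (ν - cfun σ) = 0 := by
    have h1 := congrFun (congrArg (fun z : AddMonoidAlgebra k (Fin n → ℤ) => ⇑z.coeff) hsum) ν
    rw [AddMonoidAlgebra.coeff_sum, Finsupp.finset_sum_apply] at h1
    rw [show (0 : AddMonoidAlgebra k (Fin n → ℤ)).coeff ν = 0 from rfl] at h1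
    rw [← h1]
    apply Finset.sum_congr rfl
    intro σ _
    have h2 : (g σ • (bas σ : AddMonoidAlgebra k (Fin n → ℤ)))
        = (g σ : AddMonoidAlgebra k (Fin n → ℤ)) * bas σ := rfl
    rw [h2, mul_bas_coeff]
  -- all terms except σ₀ vanish
  have hclaim : ∀ σ : Equiv.Perm (Fin n), σ ≠ σ₀ →
      (g σ : AddMonoidAlgebra k (Fin n → ℤ)).coeff (ν - cfun σ) = 0 := by
    intro σ hσne
    by_contra hterm
    set w : Fin n → ℤ := ν - cfun σ with hwdef
    set μ : Fin n → ℤ := w ∘ ⇑(Tuple.sort w) with hμdef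
    have hμ : Monotone μ := srt_monotone w
    have hw : w ∈ (g σ : AddMonoidAlgebra k (Fin n → ℤ)).coeff.support :=
      Finsupp.mem_support_iff.2 hterm
    have hνrep : ν = fun p => μ ((Tuple.sort w)⁻¹ p) + cfun σ p := by
      funext p
      have : μ ((Tuple.sort w)⁻¹ p) = w p := by
        rw [hμdef]
        simp [Function.comp_apply, Equiv.Perm.inv_def]
      rw [this, hwdef]
      simp
    have hord : ord ν (Phi σ μ) := by
      rw [hνrep]
      exact key_triangle σ (Tuple.sort w)⁻¹ hμ
    have hPhiT : Phi σ μ ∈ T := Finset.mem_biUnion.2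
      ⟨σ, Finset.mem_univ _, Finset.mem_image.2 ⟨w, hw, rfl⟩⟩
    have hPhiν : Phi σ μ = ν := hmax _ hPhiT hord
    rw [← hνeq] at hPhiν
    exact hσne (phi_inj hμ hμ₀ hPhiν).1
  have hsingle : ∑ σ : Equiv.Perm (Fin n),
      (g σ : AddMonoidAlgebra k (Fin n → ℤ)).coeff (ν - cfun σ)
      = (g σ₀ : AddMonoidAlgebra k (Fin n → ℤ)).coeff (ν - cfun σ₀) :=
    Finset.sum_eq_single σ₀ (fun b _ hb => hclaim b hb)
      (fun h => absurd (Finset.mem_univ σ₀) h)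
  have hrest : ν - cfun σ₀ = μ₀ ∘ ⇑(σ₀⁻¹) := by
    funext p
    rw [← hνeq]
    simp [Phi, Equiv.Perm.inv_def]
  have : (g σ₀ : AddMonoidAlgebra k (Fin n → ℤ)).coeff (ν - cfun σ₀) ≠ 0 := by
    rw [hrest, mem_symLaurent_coeff (g σ₀).2 σ₀⁻¹ μ₀]
    exact hval₀
  rw [hsingle] at hcoeff
  exact this hcoeff


open scoped Classical

variable {n : ℕ} {k : Type*} [CommRing k]

/-- the span of the descent monomials over the symmetric subalgebra -/
noncomputable def SP (k : Type*) [CommRing k] (n : ℕ) :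
    Submodule (symLaurent k n) (AddMonoidAlgebra k (Fin n → ℤ)) :=
  Submodule.span (symLaurent k n)
    (Set.range fun σ : Equiv.Perm (Fin n) => (bas σ : AddMonoidAlgebra k (Fin n → ℤ)))

lemma SP_mul_mem {r x : AddMonoidAlgebra k (Fin n → ℤ)} (hr : r ∈ symLaurent k n)
    (hx : x ∈ SP k n) : r * x ∈ SP k n := by
  have : r * x = (⟨r, hr⟩ : symLaurent k n) • x := rfl
  rw [this]
  exact Submodule.smul_mem _ _ hx

lemma SP_ksmul {x : AddMonoidAlgebra k (Fin n → ℤ)} (c : k) (hx : x ∈ SP k n) :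
    c • x ∈ SP k n := by
  rw [Algebra.smul_def]
  exact SP_mul_mem (Subalgebra.algebraMap_mem _ c) hx

lemma bas_mem_SP (σ : Equiv.Perm (Fin n)) : (bas σ : AddMonoidAlgebra k (Fin n → ℤ)) ∈ SP k n :=
  Submodule.subset_span ⟨σ, rfl⟩

lemma msum_mul_bas_coeff (μ : Fin n → ℤ) (σ : Equiv.Perm (Fin n)) (a : Fin n → ℤ) :
    ((msum μ * bas σ : AddMonoidAlgebra k (Fin n → ℤ))).coeff a
      = if a - cfun σ ∈ orb μ then (1:k) else 0 := by
  rw [mul_bas_coeff, msum_coeff]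

lemma span_nonneg (D : ℕ) : ∀ (m : ℕ) (x : AddMonoidAlgebra k (Fin n → ℤ)),
    (∀ a ∈ x.coeff.support, (∀ i, 0 ≤ a i) ∧ (∑ i, a i) ≤ (D : ℤ)) →
    ((Finset.Icc (0 : Fin n → ℤ) (fun _ => (D : ℤ))).filter
      (fun gp => ∃ a ∈ x.coeff.support, ord gp a)).card ≤ m →
    x ∈ SP k n := by
  intro m
  induction m with
  | zero =>
    intro x hsupp hcard
    by_cases hx0 : x = 0
    · rw [hx0]; exact Submodule.zero_mem _
    · exfalso
      obtain ⟨ν, hν⟩ := (Finsupp.support_nonempty_iff (f := x.coeff)).2 (by simpa using hx0)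
      have hbox : ν ∈ Finset.Icc (0 : Fin n → ℤ) (fun _ => (D : ℤ)) := by
        rw [Finset.mem_Icc]
        obtain ⟨hnn, hdeg⟩ := hsupp ν hν
        constructor
        · intro i; exact hnn i
        · intro i
          calc ν i ≤ ∑ j, ν j := Finset.single_le_sum (fun j _ => hnn j) (Finset.mem_univ i)
          _ ≤ (D : ℤ) := hdeg
      have hmem : ν ∈ (Finset.Icc (0 : Fin n → ℤ) (fun _ => (D : ℤ))).filter
          (fun gp => ∃ a ∈ x.coeff.support, ord gp a) :=
        Finset.mem_filter.2 ⟨hbox, ⟨ν, hν, ord_refl ν⟩⟩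
      have := Finset.card_pos.2 ⟨ν, hmem⟩
      omega
  | succ m ih =>
    intro x hsupp hcard
    by_cases hx0 : x = 0
    · rw [hx0]; exact Submodule.zero_mem _
    obtain ⟨ν, hν, hmax⟩ := exists_ord_max x.coeff.support ((Finsupp.support_nonempty_iff (f := x.coeff)).2 (by simpa using hx0))
    obtain ⟨σ, μ, hμ, hPhi, hnn⟩ := exists_sorted ν
    have hνnn : ∀ i, 0 ≤ ν i := (hsupp ν hν).1
    have hμnn : ∀ i, 0 ≤ μ i := hnn hνnn
    set y := x - x.coeff ν • (msum μ * bas σ : AddMonoidAlgebra k (Fin n → ℤ)) with hydef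
    have hsub : ν - cfun σ ∈ orb μ := by
      refine mem_orb.2 ⟨σ⁻¹, ?_⟩
      funext p
      rw [← hPhi]
      simp [Phi, Equiv.Perm.inv_def]
    have hyν : y.coeff ν = 0 := by
      rw [hydef, AddMonoidAlgebra.coeff_sub, Finsupp.sub_apply, AddMonoidAlgebra.coeff_smul,
          Finsupp.smul_apply, msum_mul_bas_coeff,
        if_pos hsub, smul_eq_mul, mul_one, sub_self]
    have hysupp : ∀ a ∈ y.coeff.support, a ∈ x.coeff.support ∨ a - cfun σ ∈ orb μ := by
      intro a ha
      by_contra hcon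
      push_neg at hcon
      have h1 : y.coeff a = 0 := by
        rw [hydef, AddMonoidAlgebra.coeff_sub, Finsupp.sub_apply, AddMonoidAlgebra.coeff_smul,
          Finsupp.smul_apply, msum_mul_bas_coeff,
          if_neg hcon.2, smul_eq_mul, mul_zero, sub_zero]
        exact Finsupp.notMem_support_iff.1 hcon.1
      exact Finsupp.mem_support_iff.1 ha h1
    have horb_ord : ∀ a : Fin n → ℤ, a - cfun σ ∈ orb μ → ord a ν := by
      intro a haorb
      obtain ⟨ρ, hρ⟩ := mem_orb.1 haorb
      have ha : a = fun p => μ (ρ p) + cfun σ p := by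
        funext p
        have := congrFun hρ p
        simp only [Function.comp_apply] at this
        have h2 : a p - cfun σ p = μ (ρ p) := by
          rw [this, Pi.sub_apply]
        omega
      rw [ha, ← hPhi]
      exact key_triangle σ ρ hμ
    have hsum_orb : ∀ a : Fin n → ℤ, a - cfun σ ∈ orb μ →
        (∀ i, 0 ≤ a i) ∧ (∑ i, a i) ≤ (D : ℤ) := by
      intro a haorb
      obtain ⟨ρ, hρ⟩ := mem_orb.1 haorb
      have ha : ∀ p, a p = μ (ρ p) + cfun σ p := by
        intro p
        have := congrFun hρ p
        simp only [Function.comp_apply] at this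
        have h2 : a p - cfun σ p = μ (ρ p) := by
          rw [this, Pi.sub_apply]
        omega
      constructor
      · intro i
        rw [ha i]
        have := hμnn (ρ i)
        have := cfun_nonneg σ i
        omega
      · have h1 : ∑ i, a i = ∑ i, (μ (ρ i) + cfun σ i) := Finset.sum_congr rfl fun i _ => ha i
        have h2 : ∑ i, μ (ρ i) = ∑ i, μ i := Equiv.sum_comp ρ μ
        have h3 : ∑ i, ν i = ∑ i, (μ (σ.symm i) + cfun σ i) := by
          apply Finset.sum_congr rfl
          intro i _
          rw [← hPhi]; rfl
        have h4 : ∑ i, μ (σ.symm i) = ∑ i, μ i := Equiv.sum_comp σ.symm μ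
        have h5 := (hsupp ν hν).2
        rw [Finset.sum_add_distrib] at h1 h3
        omega
    -- the measure decreases
    have hmain : ((Finset.Icc (0 : Fin n → ℤ) (fun _ => (D : ℤ))).filter
        (fun gp => ∃ a ∈ y.coeff.support, ord gp a)).card ≤ m := by
      have hνbox : ν ∈ Finset.Icc (0 : Fin n → ℤ) (fun _ => (D : ℤ)) := by
        rw [Finset.mem_Icc]
        refine ⟨fun i => hνnn i, fun i => ?_⟩
        calc ν i ≤ ∑ j, ν j := Finset.single_le_sum (fun j _ => hνnn j) (Finset.mem_univ i)
        _ ≤ (D : ℤ) := (hsupp ν hν).2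
      have hνSx : ν ∈ (Finset.Icc (0 : Fin n → ℤ) (fun _ => (D : ℤ))).filter
          (fun gp => ∃ a ∈ x.coeff.support, ord gp a) :=
        Finset.mem_filter.2 ⟨hνbox, ⟨ν, hν, ord_refl ν⟩⟩
      have hsubset : (Finset.Icc (0 : Fin n → ℤ) (fun _ => (D : ℤ))).filter
          (fun gp => ∃ a ∈ y.coeff.support, ord gp a)
          ⊆ ((Finset.Icc (0 : Fin n → ℤ) (fun _ => (D : ℤ))).filter
            (fun gp => ∃ a ∈ x.coeff.support, ord gp a)).erase ν := by
        intro gp hgp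
        obtain ⟨hgbox, a, hay, hga⟩ := Finset.mem_filter.1 hgp
        have haν : ord ν a → a ≠ ν → False := by
          intro h1 h2
          rcases hysupp a hay with hax | horb
          · exact h2 (hmax a hax h1)
          · exact h2 (ord_antisymm (horb_ord a horb) h1)
        refine Finset.mem_erase.2 ⟨?_, ?_⟩
        · intro hgν
          subst hgν
          have hane : a ≠ gp := by
            intro h; subst h
            exact Finsupp.mem_support_iff.1 hay hyν
          exact haν hga hane
        · refine Finset.mem_filter.2 ⟨hgbox, ?_⟩
          rcases hysupp a hay with hax | horb
          · exact ⟨a, hax, hga⟩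
          · exact ⟨ν, hν, ord_trans hga (horb_ord a horb)⟩
      have hc1 := Finset.card_le_card hsubset
      have hc2 := Finset.card_erase_lt_of_mem hνSx
      omega
    have hy : y ∈ SP k n := by
      apply ih y ?_ hmain
      intro a ha
      rcases hysupp a ha with hax | horb
      · exact hsupp a hax
      · exact hsum_orb a horb
    have hxy : x = y + x.coeff ν • (msum μ * bas σ : AddMonoidAlgebra k (Fin n → ℤ)) := by
      rw [hydef]; ring
    rw [hxy]
    exact Submodule.add_mem _ hy (SP_ksmul _ (SP_mul_mem (msum_mem μ) (bas_mem_SP σ)))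


open scoped Classical

variable {n : ℕ} {k : Type*} [CommRing k]

lemma span_top (x : AddMonoidAlgebra k (Fin n → ℤ)) : x ∈ SP k n := by
  -- bound the negativity of exponents
  have hex : ∃ N : ℕ, ∀ a ∈ x.coeff.support, ∀ i, -(N : ℤ) ≤ a i := by
    refine ⟨x.coeff.support.sup (fun a => Finset.univ.sup (fun i => (-(a i)).toNat)), ?_⟩
    intro a ha i
    have h1 : (-(a i)).toNat ≤ Finset.univ.sup (fun i => (-(a i)).toNat) :=
      Finset.le_sup (f := fun i => (-(a i)).toNat) (Finset.mem_univ i)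
    have h2 : Finset.univ.sup (fun i => (-(a i)).toNat)
        ≤ x.coeff.support.sup (fun a => Finset.univ.sup (fun i => (-(a i)).toNat)) :=
      Finset.le_sup (f := fun a => Finset.univ.sup (fun i => (-(a i)).toNat)) ha
    have h3 : -(a i) ≤ ((-(a i)).toNat : ℤ) := Int.self_le_toNat _
    have h4 : ((-(a i)).toNat : ℤ) ≤
        ((x.coeff.support.sup (fun a => Finset.univ.sup (fun i => (-(a i)).toNat)) : ℕ) : ℤ) := by
      exact_mod_cast le_trans h1 h2
    exact neg_le.mp (le_trans h3 h4)
  obtain ⟨N, hNb⟩ := hex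
  set E : Fin n → ℤ := fun _ => (N : ℤ) with hE
  set u : AddMonoidAlgebra k (Fin n → ℤ) := AddMonoidAlgebra.single E 1 with hu
  set y := u * x with hy
  have hycoeff : ∀ a, y.coeff a = x.coeff (-E + a) := by
    intro a
    rw [hy, hu, AddMonoidAlgebra.coeff_single_mul_apply, one_mul]
  have hynn : ∀ a ∈ y.coeff.support, (∀ i, 0 ≤ a i) := by
    intro a ha i
    have h1 : y.coeff a ≠ 0 := Finsupp.mem_support_iff.1 ha
    rw [hycoeff] at h1
    have h2 : (-E + a) ∈ x.coeff.support := Finsupp.mem_support_iff.2 h1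
    have h3 := hNb _ h2 i
    have h4 : (-E + a) i = a i - (N : ℤ) := by
      simp [hE]
      ring
    omega
  have hexD : ∃ D : ℕ, ∀ a ∈ y.coeff.support, (∀ i, 0 ≤ a i) ∧ (∑ i, a i) ≤ (D : ℤ) := by
    refine ⟨y.coeff.support.sup (fun a => (∑ i, a i).toNat), ?_⟩
    intro a ha
    refine ⟨hynn a ha, ?_⟩
    have h1 : (∑ i, a i).toNat ≤ y.coeff.support.sup (fun a => (∑ i, a i).toNat) :=
      Finset.le_sup (f := fun a => (∑ i, a i).toNat) ha
    have h2 : (∑ i, a i) ≤ ((∑ i, a i).toNat : ℤ) := Int.self_le_toNat _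
    have h3 : (((∑ i, a i).toNat : ℤ)) ≤
        ((y.coeff.support.sup (fun a => (∑ i, a i).toNat) : ℕ) : ℤ) := by exact_mod_cast h1
    exact le_trans h2 h3
  obtain ⟨D, hyD⟩ := hexD
  have hySP : y ∈ SP k n := span_nonneg D _ y hyD le_rfl
  -- x = single (-E) 1 * y
  have hEmem : (AddMonoidAlgebra.single (fun _ => -(N : ℤ) : Fin n → ℤ) 1 :
      AddMonoidAlgebra k (Fin n → ℤ)) ∈ symLaurent k n := const_single_mem _
  have hfinal : (AddMonoidAlgebra.single (fun _ => -(N : ℤ) : Fin n → ℤ) 1 :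
      AddMonoidAlgebra k (Fin n → ℤ)) * y = x := by
    rw [hy, hu, ← mul_assoc, AddMonoidAlgebra.single_mul_single, one_mul]
    have h1 : (fun _ => -(N : ℤ) : Fin n → ℤ) + E = 0 := by
      funext p
      simp [hE]
    rw [h1, ← AddMonoidAlgebra.one_def, one_mul]
  rw [← hfinal]
  exact SP_mul_mem hEmem hySP

lemma bas_span_top :
    ⊤ ≤ Submodule.span (symLaurent k n)
      (Set.range fun σ : Equiv.Perm (Fin n) => (bas σ : AddMonoidAlgebra k (Fin n → ℤ))) :=
  fun x _ => span_top x


end LaurentFree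

/-- The Laurent polynomial ring `k[h₁^{±1},…,hₙ^{±1}]` is a free
module of rank `n!` over its subring of symmetric elements
`k[h₁^{±1},…,hₙ^{±1}]^{Sₙ}`. -/
theorem laurent_free_over_symmetric (k : Type*) [Field k] [CharZero k] (n : ℕ) :
    Nonempty (Module.Basis (Fin (Nat.factorial n)) (symLaurent k n)
      (AddMonoidAlgebra k (Fin n → ℤ))) := by
  have b : Module.Basis (Equiv.Perm (Fin n)) (symLaurent k n) (AddMonoidAlgebra k (Fin n → ℤ)) :=
    Module.Basis.mk LaurentFree.bas_linearIndependent LaurentFree.bas_span_top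
  refine ⟨b.reindex (Fintype.equivFinOfCardEq ?_)⟩
  simp [Fintype.card_perm]
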